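/- Suppose F satisfies the class F₄ condition F(x,y,z) = -(θ(ξ)/(2n))·{g(φx,φy)η(z) + g(φx,φz)η(y)} for a constant θ(ξ) ∈ ℝ on an almost contact B-metric vector space. Then the Nijenhuis-type tensor N built from F by N(x,y,z) = F(φx,y,z) - F(x,y,φz) + F(x,φy,ξ)η(z) - F(φy,x,z) + F(y,x,φz) - F(y,φx,ξ)η(z) vanishes identically. -/
import Mathlib

theorem stmt9 (V : Type*) [AddCommGroup V] [Module ℝ V]
    (φ : V →ₗ[ℝ] V) (ξ : V) (η : V →ₗ[ℝ] ℝ)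
    (hφξ : φ ξ = 0) (hφ2 : ∀ x : V, φ (φ x) = -x + η x • ξ)
    (hηφ : ∀ x : V, η (φ x) = 0) (hηξ : η ξ = 1)
    (g : V →ₗ[ℝ] V →ₗ[ℝ] ℝ) (hsym : ∀ x y : V, g x y = g y x)
    (hB : ∀ x y : V, g (φ x) (φ y) = - g x y + η x * η y)
    (n : ℕ) (θξ : ℝ)
    (F : V → V → V → ℝ)
    (hF : ∀ x y z : V, F x y z =
      -(θξ / (2 * n)) * (g (φ x) (φ y) * η z + g (φ x) (φ z) * η y))
    (N : V → V → V → ℝ)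
    (hN : ∀ x y z : V, N x y z = F (φ x) y z - F x y (φ z) + F x (φ y) ξ * η z
          - F (φ y) x z + F y x (φ z) - F y (φ x) ξ * η z) :
    ∀ x y z : V, N x y z = 0 := by
  intro x y z
  simp only [hN, hF, hφ2, hφξ, hηφ, hηξ, map_add, map_neg, map_smul, map_zero,
    LinearMap.add_apply, LinearMap.neg_apply, LinearMap.smul_apply, LinearMap.zero_apply,
    smul_eq_mul]
  have hgξ : ∀ w : V, g w ξ = η w := by
    intro w
    have := hB w ξ
    rw [hφξ, hηξ] at this
    simp only [map_zero, LinearMap.zero_apply, mul_one] at this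
    linarith
  have h0 : ∀ w : V, g (φ w) ξ = 0 := fun w => by rw [hgξ, hηφ]
  have hswap : ∀ a b : V, g (φ a) b = g (φ b) a := by
    intro a b
    have := hB a (φ b)
    rw [hφ2 b, hηφ] at this
    simp only [map_add, map_neg, map_smul, smul_eq_mul, h0, mul_zero, add_zero, mul_zero, neg_add_rev] at this
    have : - g (φ a) b = - g a (φ b) := by linarith [this]
    rw [hsym a (φ b)] at this
    linarith
  rw [hsym x (φ y), hsym x (φ z), hsym ξ (φ y), hsym ξ (φ z), hsym ξ (φ x),
    hsym y (φ x), hsym y (φ z)]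
  rw [hswap y x, hswap z x, hswap z y]
  simp only [h0]
  ring
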